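/- arXiv:2306.14820 — 2 statements merged into one kernel-verified Lean document; each statement's English description precedes it below -/
import Mathlib

section
/- Let M be an n×n symmetric diagonally dominant matrix with decomposition M = D - A, where D is diagonal with strictly positive entries. Let N = D^{-1/2} M D^{-1/2} be the normalization of M. Then for any vector x orthogonal to the null space of M, x^T M^† x = (1/2)⟨D^{-1} x, D^{1/2}(N/2)^† D^{-1/2} x⟩ = ⟨D^{-1/2} x, N^† D^{-1/2} x⟩. -/
open Matrix

/-- `P` is the Moore–Penrose pseudoinverse of `M`. -/
def IsMoorePenrose {n : ℕ} (M P : Matrix (Fin n) (Fin n) ℝ) : Prop :=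
  M * P * M = M ∧ P * M * P = P ∧ (M * P)ᵀ = M * P ∧ (P * M)ᵀ = P * M

lemma mp_unique {n : ℕ} {M P Q : Matrix (Fin n) (Fin n) ℝ}
    (hP : IsMoorePenrose M P) (hQ : IsMoorePenrose M Q) : P = Q := by
  obtain ⟨hP1, hP2, hP3, hP4⟩ := hP
  obtain ⟨hQ1, hQ2, hQ3, hQ4⟩ := hQ
  have hMPQ : M * P = M * Q := by
    calc M * P = (M * P)ᵀ := hP3.symm
      _ = Pᵀ * Mᵀ := by rw [transpose_mul]
      _ = Pᵀ * (M * Q * M)ᵀ := by rw [hQ1]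
      _ = Pᵀ * (Mᵀ * (M * Q)ᵀ) := by rw [transpose_mul]
      _ = Pᵀ * Mᵀ * (M * Q) := by rw [hQ3, ← mul_assoc]
      _ = (M * P)ᵀ * (M * Q) := by rw [transpose_mul]
      _ = M * P * (M * Q) := by rw [hP3]
      _ = M * P * M * Q := by rw [← mul_assoc]
      _ = M * Q := by rw [hP1]
  have hPQM : P * M = Q * M := by
    calc P * M = (P * M)ᵀ := hP4.symm
      _ = Mᵀ * Pᵀ := by rw [transpose_mul]
      _ = (M * Q * M)ᵀ * Pᵀ := by rw [hQ1]
      _ = (Q * M)ᵀ * Mᵀ * Pᵀ := by rw [mul_assoc M Q M, transpose_mul]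
      _ = Q * M * Mᵀ * Pᵀ := by rw [hQ4]
      _ = Q * M * (P * M)ᵀ := by rw [mul_assoc, ← transpose_mul]
      _ = Q * M * (P * M) := by rw [hP4]
      _ = Q * (M * P * M) := by rw [mul_assoc, ← mul_assoc M P M]
      _ = Q * M := by rw [hP1]
  calc P = P * M * P := hP2.symm
    _ = Q * M * P := by rw [hPQM]
    _ = Q * (M * P) := by rw [mul_assoc]
    _ = Q * (M * Q) := by rw [hMPQ]
    _ = Q * M * Q := by rw [← mul_assoc]
    _ = Q := hQ2

lemma dp_adj {n : ℕ} (A : Matrix (Fin n) (Fin n) ℝ) (y z : Fin n → ℝ) :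
    (A *ᵥ y) ⬝ᵥ z = y ⬝ᵥ (Aᵀ *ᵥ z) := by
  rw [dotProduct_mulVec, vecMul_transpose]

theorem stmt0 {n : ℕ} (d : Fin n → ℝ) (hd : ∀ i, 0 < d i)
    (A : Matrix (Fin n) (Fin n) ℝ) (hAsymm : Aᵀ = A) (hAdiag : ∀ i, A i i = 0)
    (hSDD : ∀ i, ∑ j, |A i j| < d i)
    (M N : Matrix (Fin n) (Fin n) ℝ)
    (hM : M = Matrix.diagonal d - A)
    (hN : N = Matrix.diagonal (fun i => (Real.sqrt (d i))⁻¹) * M *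
      Matrix.diagonal (fun i => (Real.sqrt (d i))⁻¹))
    (Mdag Ndag Nhalfdag : Matrix (Fin n) (Fin n) ℝ)
    (hMdag : IsMoorePenrose M Mdag) (hNdag : IsMoorePenrose N Ndag)
    (hNhalfdag : IsMoorePenrose ((1 / 2 : ℝ) • N) Nhalfdag)
    (x : Fin n → ℝ) (hx : ∀ y, M.mulVec y = 0 → x ⬝ᵥ y = 0) :
    x ⬝ᵥ Mdag.mulVec x =
      (1 / 2) * ((Matrix.diagonal (fun i => (d i)⁻¹)).mulVec x ⬝ᵥ
        (Matrix.diagonal (fun i => Real.sqrt (d i)) * Nhalfdag *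
          Matrix.diagonal (fun i => (Real.sqrt (d i))⁻¹)).mulVec x) ∧
    x ⬝ᵥ Mdag.mulVec x =
      (Matrix.diagonal (fun i => (Real.sqrt (d i))⁻¹)).mulVec x ⬝ᵥ
        Ndag.mulVec ((Matrix.diagonal (fun i => (Real.sqrt (d i))⁻¹)).mulVec x) := by
  set S : Matrix (Fin n) (Fin n) ℝ := Matrix.diagonal (fun i => Real.sqrt (d i)) with hS
  set Si : Matrix (Fin n) (Fin n) ℝ := Matrix.diagonal (fun i => (Real.sqrt (d i))⁻¹) with hSi
  have hsqrt : ∀ i, Real.sqrt (d i) ≠ 0 := fun i => (Real.sqrt_pos.2 (hd i)).ne'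
  have hSSi : S * Si = 1 := by
    rw [hS, hSi, diagonal_mul_diagonal]
    simp only [mul_inv_cancel₀ (hsqrt _)]
    exact Matrix.diagonal_one
  have hSiS : Si * S = 1 := by
    rw [hS, hSi, diagonal_mul_diagonal]
    simp only [inv_mul_cancel₀ (hsqrt _)]
    exact Matrix.diagonal_one
  have hSsymm : Sᵀ = S := by rw [hS]; exact diagonal_transpose _
  have hSisymm : Siᵀ = Si := by rw [hSi]; exact diagonal_transpose _
  have hMsymm : Mᵀ = M := by
    rw [hM, transpose_sub, diagonal_transpose, hAsymm]
  have hNsymm : Nᵀ = N := by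
    rw [hN, transpose_mul, transpose_mul, hSisymm, hMsymm, mul_assoc]
  have hNS : Si * M = N * S := by
    rw [hN, mul_assoc, hSiS, mul_one]
  have hSNS : S * N * S = M := by
    have : S * (Si * M * Si) * S = S * Si * M * (Si * S) := by noncomm_ring
    rw [hN, this, hSSi, hSiS, one_mul, mul_one]
  -- Mdag is symmetric
  obtain ⟨h1, h2, h3, h4⟩ := hMdag
  have hMdagT : IsMoorePenrose M Mdagᵀ := by
    refine ⟨?_, ?_, ?_, ?_⟩
    · have h := congrArg transpose h1
      simp only [transpose_mul, transpose_transpose, hMsymm, ← mul_assoc] at h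
      exact h
    · have h := congrArg transpose h2
      simp only [transpose_mul, transpose_transpose, hMsymm, ← mul_assoc] at h
      exact h
    · have h := h4
      simp only [transpose_mul, hMsymm] at h
      simp only [transpose_mul, transpose_transpose, hMsymm]
      rw [h]
    · have h := h3
      simp only [transpose_mul, hMsymm] at h
      simp only [transpose_mul, transpose_transpose, hMsymm]
      rw [h]
  have hMdsymm : Mdagᵀ = Mdag := mp_unique hMdagT ⟨h1, h2, h3, h4⟩
  -- Nhalfdag = 2 • Ndag
  obtain ⟨g1, g2, g3, g4⟩ := hNdag
  have hhalf : IsMoorePenrose ((1 / 2 : ℝ) • N) ((2 : ℝ) • Ndag) := by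
    refine ⟨?_, ?_, ?_, ?_⟩
    · simp only [smul_mul_assoc, mul_smul_comm, smul_smul]
      norm_num [g1]
    · simp only [smul_mul_assoc, mul_smul_comm, smul_smul]
      norm_num [g2]
    · simp only [smul_mul_assoc, mul_smul_comm, smul_smul, transpose_smul]
      norm_num [g3]
    · simp only [smul_mul_assoc, mul_smul_comm, smul_smul, transpose_smul]
      norm_num [g4]
  have hNh : Nhalfdag = (2 : ℝ) • Ndag := mp_unique hNhalfdag hhalf
  -- x is in the range of M
  have hMMd : M * Mdag = Mdag * M := by
    calc M * Mdag = (M * Mdag)ᵀ := h3.symm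
      _ = Mdagᵀ * Mᵀ := by rw [transpose_mul]
      _ = Mdag * M := by rw [hMdsymm, hMsymm]
  have hrange : ∃ y, x = M *ᵥ y := by
    refine ⟨Mdag *ᵥ x, ?_⟩
    have hproj : M * (M * Mdag) = M := by rw [hMMd, ← mul_assoc, h1]
    have hMz : M *ᵥ (x - M *ᵥ (Mdag *ᵥ x)) = 0 := by
      rw [mulVec_sub, mulVec_mulVec, mulVec_mulVec, mul_assoc, hproj, sub_self]
    have hxz := hx _ hMz
    have hyz : (M *ᵥ (Mdag *ᵥ x)) ⬝ᵥ (x - M *ᵥ (Mdag *ᵥ x)) = 0 := by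
      rw [dp_adj, hMsymm, hMz, dotProduct_zero]
    have hz : (x - M *ᵥ (Mdag *ᵥ x)) ⬝ᵥ (x - M *ᵥ (Mdag *ᵥ x)) = 0 := by
      rw [sub_dotProduct, hxz, hyz, sub_zero]
    exact (sub_eq_zero.mp (dotProduct_self_eq_zero.mp hz))
  obtain ⟨y, hxMy⟩ := hrange
  -- common value: x ⬝ᵥ Mdag *ᵥ x = y ⬝ᵥ M *ᵥ y
  have hL : x ⬝ᵥ Mdag *ᵥ x = y ⬝ᵥ M *ᵥ y := by
    rw [hxMy, dp_adj, hMsymm, mulVec_mulVec, mulVec_mulVec, h1]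
  -- second claim
  have hR2 : Si *ᵥ x ⬝ᵥ Ndag *ᵥ (Si *ᵥ x) = y ⬝ᵥ M *ᵥ y := by
    have hSix : Si *ᵥ x = N *ᵥ (S *ᵥ y) := by
      rw [hxMy, mulVec_mulVec, hNS, ← mulVec_mulVec]
    rw [hSix, dp_adj, hNsymm, mulVec_mulVec, mulVec_mulVec, g1]
    rw [dp_adj, hSsymm, mulVec_mulVec, mulVec_mulVec, hSNS]
  have goal2 : x ⬝ᵥ Mdag *ᵥ x = Si *ᵥ x ⬝ᵥ Ndag *ᵥ (Si *ᵥ x) := by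
    rw [hL, hR2]
  refine ⟨?_, goal2⟩
  -- first claim
  have hDi : Matrix.diagonal (fun i => (d i)⁻¹) = Si * Si := by
    rw [hSi, diagonal_mul_diagonal]
    exact congrArg _ (funext fun i => by
      rw [← mul_inv, Real.mul_self_sqrt (hd i).le])
  have e1 : S * Nhalfdag * Si = (2 : ℝ) • (S * Ndag * Si) := by
    rw [hNh, mul_smul_comm, smul_mul_assoc]
  have e2 : (Si * Si) *ᵥ x ⬝ᵥ (S * Ndag * Si) *ᵥ x = Si *ᵥ x ⬝ᵥ Ndag *ᵥ (Si *ᵥ x) := by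
    rw [dp_adj, transpose_mul, hSisymm, mulVec_mulVec]
    have : Si * Si * (S * Ndag * Si) = Si * (Si * S) * Ndag * Si := by noncomm_ring
    rw [this, hSiS, mul_one, dp_adj Si x, hSisymm]
    simp only [mulVec_mulVec, ← mul_assoc]
  rw [goal2, hDi, e1, smul_mulVec, dotProduct_smul, smul_eq_mul, e2]
  ring
end

section
/- Let A be the adjacency matrix of a simple undirected graph G and Ā a symmetric random signing of A. If tr(A³) = 0 then tr(Ā³) = 0 almost surely, and if tr(A³) > 0 (i.e., G contains at least one triangle) then P[|tr(Ā³)| > 0] ≥ 1/4. -/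
open Matrix MeasureTheory ProbabilityTheory

namespace Stmt17Aux
variable {n : ℕ}

abbrev E (n : ℕ) := {p : Fin n × Fin n // p.1 < p.2}

noncomputable def M (x : E n → ℝ) (i j : Fin n) : ℝ :=
  if h : i < j then x ⟨(i,j), h⟩ else if h : j < i then x ⟨(j,i), h⟩ else 0

noncomputable def F (A : Matrix (Fin n) (Fin n) ℝ) (x : E n → ℝ) : ℝ :=
  ∑ i, ∑ j, ∑ k, A i j * A j k * A k i * (M x i j * M x j k * M x k i)

def flip (e : E n) (x : E n → ℝ) : E n → ℝ := fun e' => if e' = e then - x e' else x e'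

def ed (i j : Fin n) (h : i ≠ j) : E n :=
  if hlt : i < j then ⟨(i,j), hlt⟩ else ⟨(j,i), h.lt_or_gt.resolve_left hlt⟩

lemma M_eq (x : E n → ℝ) {i j : Fin n} (h : i ≠ j) : M x i j = x (ed i j h) := by
  rcases h.lt_or_gt with hl | hl
  · simp [M, ed, hl]
  · have : ¬ i < j := not_lt.2 hl.le
    simp [M, ed, this, hl]

lemma ed_eq_iff {i j a b : Fin n} (hij : i ≠ j) (hab : a ≠ b) :
    ed i j hij = ed a b hab ↔ (i = a ∧ j = b) ∨ (i = b ∧ j = a) := by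
  unfold ed
  rcases hij.lt_or_gt with h1 | h1 <;> rcases hab.lt_or_gt with h2 | h2
  · rw [dif_pos h1, dif_pos h2]
    simp only [Subtype.mk.injEq, Prod.mk.injEq]
    constructor
    · rintro ⟨rfl, rfl⟩; exact Or.inl ⟨rfl, rfl⟩
    · rintro (⟨rfl, rfl⟩ | ⟨rfl, rfl⟩)
      · exact ⟨rfl, rfl⟩
      · exact (lt_asymm h1 h2).elim
  · rw [dif_pos h1, dif_neg (not_lt.2 h2.le)]
    simp only [Subtype.mk.injEq, Prod.mk.injEq]
    constructor
    · rintro ⟨rfl, rfl⟩; exact Or.inr ⟨rfl, rfl⟩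
    · rintro (⟨rfl, rfl⟩ | ⟨rfl, rfl⟩)
      · exact (lt_asymm h1 h2).elim
      · exact ⟨rfl, rfl⟩
  · rw [dif_neg (not_lt.2 h1.le), dif_pos h2]
    simp only [Subtype.mk.injEq, Prod.mk.injEq]
    constructor
    · rintro ⟨rfl, rfl⟩; exact Or.inr ⟨rfl, rfl⟩
    · rintro (⟨rfl, rfl⟩ | ⟨rfl, rfl⟩)
      · exact (lt_asymm h1 h2).elim
      · exact ⟨rfl, rfl⟩
  · rw [dif_neg (not_lt.2 h1.le), dif_neg (not_lt.2 h2.le)]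
    simp only [Subtype.mk.injEq, Prod.mk.injEq]
    constructor
    · rintro ⟨rfl, rfl⟩; exact Or.inl ⟨rfl, rfl⟩
    · rintro (⟨rfl, rfl⟩ | ⟨rfl, rfl⟩)
      · exact ⟨rfl, rfl⟩
      · exact (lt_asymm h1 h2).elim

lemma trace_cube (B : Matrix (Fin n) (Fin n) ℝ) :
    Matrix.trace (B*B*B) = ∑ i, ∑ j, ∑ k, B i j * B j k * B k i := by
  simp only [Matrix.trace, Matrix.diag, Matrix.mul_apply, Finset.sum_mul]
  exact Finset.sum_congr rfl fun i _ => Finset.sum_comm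

def S6 (a b c : Fin n) : Finset (Fin n × Fin n × Fin n) :=
  {(a,b,c),(a,c,b),(b,a,c),(b,c,a),(c,a,b),(c,b,a)}


lemma perTriple (A : Matrix (Fin n) (Fin n) ℝ) (hAs : ∀ i j, A i j = A j i)
    (hAdiag : ∀ i, A i i = 0) {a b c : Fin n}
    (hab : A a b = 1) (hbc : A b c = 1) (hca : A c a = 1)
    (nab : a ≠ b) (nbc : b ≠ c) (nca : c ≠ a)
    (x : E n → ℝ) (i j k : Fin n) :
    A i j * A j k * A k i * (M x i j * M x j k * M x k i)
      - A i j * A j k * A k i *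
        (M (flip (ed a b nab) x) i j * M (flip (ed a b nab) x) j k * M (flip (ed a b nab) x) k i)
      - A i j * A j k * A k i *
        (M (flip (ed b c nbc) x) i j * M (flip (ed b c nbc) x) j k * M (flip (ed b c nbc) x) k i)
      + A i j * A j k * A k i *
        (M (flip (ed a b nab) (flip (ed b c nbc) x)) i j *
          M (flip (ed a b nab) (flip (ed b c nbc) x)) j k *
          M (flip (ed a b nab) (flip (ed b c nbc) x)) k i)
    = if (i,j,k) ∈ S6 a b c then
        4 * (x (ed a b nab) * x (ed b c nbc) * x (ed c a nca)) else 0 := by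
  have hba : A b a = 1 := by rw [hAs]; exact hab
  have hcb : A c b = 1 := by rw [hAs]; exact hbc
  have hac : A a c = 1 := by rw [hAs]; exact hca
  have n12 : ed a b nab ≠ ed b c nbc := by
    intro h
    rcases (ed_eq_iff nab nbc).1 h with ⟨h1, h2⟩ | ⟨h1, h2⟩
    · exact nab h1
    · exact nca h1.symm
  have n13 : ed a b nab ≠ ed c a nca := by
    intro h
    rcases (ed_eq_iff nab nca).1 h with ⟨h1, h2⟩ | ⟨h1, h2⟩
    · exact nca h1.symm
    · exact nbc h2
  have n23 : ed b c nbc ≠ ed c a nca := by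
    intro h
    rcases (ed_eq_iff nbc nca).1 h with ⟨h1, h2⟩ | ⟨h1, h2⟩
    · exact nbc h1
    · exact nab h1.symm
  by_cases hij : i = j
  · subst hij
    rw [if_neg ?_]
    · simp [hAdiag]
    · intro hm
      simp only [S6, Finset.mem_insert, Finset.mem_singleton, Prod.mk.injEq] at hm
      omega
  by_cases hjk : j = k
  · subst hjk
    rw [if_neg ?_]
    · simp [hAdiag]
    · intro hm
      simp only [S6, Finset.mem_insert, Finset.mem_singleton, Prod.mk.injEq] at hm
      omega
  by_cases hki : k = i
  · subst hki
    rw [if_neg ?_]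
    · simp [hAdiag]
    · intro hm
      simp only [S6, Finset.mem_insert, Finset.mem_singleton, Prod.mk.injEq] at hm
      omega
  rw [M_eq x hij, M_eq x hjk, M_eq x hki,
    M_eq _ hij, M_eq _ hjk, M_eq _ hki, M_eq _ hij, M_eq _ hjk, M_eq _ hki,
    M_eq _ hij, M_eq _ hjk, M_eq _ hki]
  by_cases h2 : (ed i j hij = ed b c nbc ∨ ed j k hjk = ed b c nbc ∨ ed k i hki = ed b c nbc)
  swap
  · push_neg at h2
    obtain ⟨m1, m2, m3⟩ := h2
    have hnm : (i, j, k) ∉ S6 a b c := by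
      intro hm
      simp only [S6, Finset.mem_insert, Finset.mem_singleton, Prod.mk.injEq] at hm
      rcases hm with ⟨h, h', h''⟩ | ⟨h, h', h''⟩ | ⟨h, h', h''⟩ | ⟨h, h', h''⟩ |
        ⟨h, h', h''⟩ | ⟨h, h', h''⟩
      · exact m2 ((ed_eq_iff hjk nbc).2 (Or.inl ⟨h', h''⟩))
      · exact m2 ((ed_eq_iff hjk nbc).2 (Or.inr ⟨h', h''⟩))
      · exact m3 ((ed_eq_iff hki nbc).2 (Or.inr ⟨h'', h⟩))
      · exact m1 ((ed_eq_iff hij nbc).2 (Or.inl ⟨h, h'⟩))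
      · exact m3 ((ed_eq_iff hki nbc).2 (Or.inl ⟨h'', h⟩))
      · exact m1 ((ed_eq_iff hij nbc).2 (Or.inr ⟨h, h'⟩))
    rw [if_neg hnm]
    simp only [flip, if_neg m1, if_neg m2, if_neg m3]
    ring
  by_cases h1 : (ed i j hij = ed a b nab ∨ ed j k hjk = ed a b nab ∨ ed k i hki = ed a b nab)
  swap
  · push_neg at h1
    obtain ⟨m1, m2, m3⟩ := h1
    have hnm : (i, j, k) ∉ S6 a b c := by
      intro hm
      simp only [S6, Finset.mem_insert, Finset.mem_singleton, Prod.mk.injEq] at hm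
      rcases hm with ⟨h, h', h''⟩ | ⟨h, h', h''⟩ | ⟨h, h', h''⟩ | ⟨h, h', h''⟩ |
        ⟨h, h', h''⟩ | ⟨h, h', h''⟩
      · exact m1 ((ed_eq_iff hij nab).2 (Or.inl ⟨h, h'⟩))
      · exact m3 ((ed_eq_iff hki nab).2 (Or.inr ⟨h'', h⟩))
      · exact m1 ((ed_eq_iff hij nab).2 (Or.inr ⟨h, h'⟩))
      · exact m3 ((ed_eq_iff hki nab).2 (Or.inl ⟨h'', h⟩))
      · exact m2 ((ed_eq_iff hjk nab).2 (Or.inl ⟨h', h''⟩))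
      · exact m2 ((ed_eq_iff hjk nab).2 (Or.inr ⟨h', h''⟩))
    rw [if_neg hnm]
    simp only [flip, if_neg m1, if_neg m2, if_neg m3]
    ring
  rcases h1 with hu1 | hv1 | hw1 <;> rcases h2 with hu2 | hv2 | hw2
  · exact absurd (hu1.symm.trans hu2) n12
  · -- case hu1, hv2: triple (a,b,c)
    have h3 : i = a ∧ j = b ∧ k = c := by
      rcases (ed_eq_iff hij nab).1 hu1 with ⟨h, h'⟩ | ⟨h, h'⟩ <;>
        rcases (ed_eq_iff hjk nbc).1 hv2 with ⟨g, g'⟩ | ⟨g, g'⟩ <;>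
        refine ⟨?_, ?_, ?_⟩ <;> omega
    have h3rd : ed k i hki = ed c a nca := (ed_eq_iff hki nca).2 (Or.inl ⟨h3.2.2, h3.1⟩)
    have hA1 : A i j = 1 := by rw [h3.1, h3.2.1]; exact hab
    have hA2 : A j k = 1 := by rw [h3.2.1, h3.2.2]; exact hbc
    have hA3 : A k i = 1 := by rw [h3.2.2, h3.1]; exact hca
    have hmem : (i, j, k) ∈ S6 a b c := by
      rw [h3.1, h3.2.1, h3.2.2]; simp [S6]
    rw [if_pos hmem, hu1, hv2, h3rd]
    simp only [flip, if_pos rfl, if_true, if_neg n12, if_neg n13, if_neg n23,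
      if_neg (Ne.symm n12), if_neg (Ne.symm n13), if_neg (Ne.symm n23), hA1, hA2, hA3]
    ring
  · -- case hu1, hw2: triple (b,a,c)
    have h3 : i = b ∧ j = a ∧ k = c := by
      rcases (ed_eq_iff hij nab).1 hu1 with ⟨h, h'⟩ | ⟨h, h'⟩ <;>
        rcases (ed_eq_iff hki nbc).1 hw2 with ⟨g, g'⟩ | ⟨g, g'⟩ <;>
        refine ⟨?_, ?_, ?_⟩ <;> omega
    have h3rd : ed j k hjk = ed c a nca := (ed_eq_iff hjk nca).2 (Or.inr ⟨h3.2.1, h3.2.2⟩)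
    have hA1 : A i j = 1 := by rw [h3.1, h3.2.1]; exact hba
    have hA2 : A j k = 1 := by rw [h3.2.1, h3.2.2]; exact hac
    have hA3 : A k i = 1 := by rw [h3.2.2, h3.1]; exact hcb
    have hmem : (i, j, k) ∈ S6 a b c := by
      rw [h3.1, h3.2.1, h3.2.2]; simp [S6]
    rw [if_pos hmem, hu1, hw2, h3rd]
    simp only [flip, if_pos rfl, if_true, if_neg n12, if_neg n13, if_neg n23,
      if_neg (Ne.symm n12), if_neg (Ne.symm n13), if_neg (Ne.symm n23), hA1, hA2, hA3]
    ring
  · -- case hv1, hu2: triple (c,b,a)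
    have h3 : i = c ∧ j = b ∧ k = a := by
      rcases (ed_eq_iff hjk nab).1 hv1 with ⟨h, h'⟩ | ⟨h, h'⟩ <;>
        rcases (ed_eq_iff hij nbc).1 hu2 with ⟨g, g'⟩ | ⟨g, g'⟩ <;>
        refine ⟨?_, ?_, ?_⟩ <;> omega
    have h3rd : ed k i hki = ed c a nca := (ed_eq_iff hki nca).2 (Or.inr ⟨h3.2.2, h3.1⟩)
    have hA1 : A i j = 1 := by rw [h3.1, h3.2.1]; exact hcb
    have hA2 : A j k = 1 := by rw [h3.2.1, h3.2.2]; exact hba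
    have hA3 : A k i = 1 := by rw [h3.2.2, h3.1]; exact hac
    have hmem : (i, j, k) ∈ S6 a b c := by
      rw [h3.1, h3.2.1, h3.2.2]; simp [S6]
    rw [if_pos hmem, hv1, hu2, h3rd]
    simp only [flip, if_pos rfl, if_true, if_neg n12, if_neg n13, if_neg n23,
      if_neg (Ne.symm n12), if_neg (Ne.symm n13), if_neg (Ne.symm n23), hA1, hA2, hA3]
    ring
  · exact absurd (hv1.symm.trans hv2) n12
  · -- case hv1, hw2: triple (c,a,b)
    have h3 : i = c ∧ j = a ∧ k = b := by
      rcases (ed_eq_iff hjk nab).1 hv1 with ⟨h, h'⟩ | ⟨h, h'⟩ <;>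
        rcases (ed_eq_iff hki nbc).1 hw2 with ⟨g, g'⟩ | ⟨g, g'⟩ <;>
        refine ⟨?_, ?_, ?_⟩ <;> omega
    have h3rd : ed i j hij = ed c a nca := (ed_eq_iff hij nca).2 (Or.inl ⟨h3.1, h3.2.1⟩)
    have hA1 : A i j = 1 := by rw [h3.1, h3.2.1]; exact hca
    have hA2 : A j k = 1 := by rw [h3.2.1, h3.2.2]; exact hab
    have hA3 : A k i = 1 := by rw [h3.2.2, h3.1]; exact hbc
    have hmem : (i, j, k) ∈ S6 a b c := by
      rw [h3.1, h3.2.1, h3.2.2]; simp [S6]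
    rw [if_pos hmem, hv1, hw2, h3rd]
    simp only [flip, if_pos rfl, if_true, if_neg n12, if_neg n13, if_neg n23,
      if_neg (Ne.symm n12), if_neg (Ne.symm n13), if_neg (Ne.symm n23), hA1, hA2, hA3]
    ring
  · -- case hw1, hu2: triple (b,c,a)
    have h3 : i = b ∧ j = c ∧ k = a := by
      rcases (ed_eq_iff hki nab).1 hw1 with ⟨h, h'⟩ | ⟨h, h'⟩ <;>
        rcases (ed_eq_iff hij nbc).1 hu2 with ⟨g, g'⟩ | ⟨g, g'⟩ <;>
        refine ⟨?_, ?_, ?_⟩ <;> omega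
    have h3rd : ed j k hjk = ed c a nca := (ed_eq_iff hjk nca).2 (Or.inl ⟨h3.2.1, h3.2.2⟩)
    have hA1 : A i j = 1 := by rw [h3.1, h3.2.1]; exact hbc
    have hA2 : A j k = 1 := by rw [h3.2.1, h3.2.2]; exact hca
    have hA3 : A k i = 1 := by rw [h3.2.2, h3.1]; exact hab
    have hmem : (i, j, k) ∈ S6 a b c := by
      rw [h3.1, h3.2.1, h3.2.2]; simp [S6]
    rw [if_pos hmem, hw1, hu2, h3rd]
    simp only [flip, if_pos rfl, if_true, if_neg n12, if_neg n13, if_neg n23,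
      if_neg (Ne.symm n12), if_neg (Ne.symm n13), if_neg (Ne.symm n23), hA1, hA2, hA3]
    ring
  · -- case hw1, hv2: triple (a,c,b)
    have h3 : i = a ∧ j = c ∧ k = b := by
      rcases (ed_eq_iff hki nab).1 hw1 with ⟨h, h'⟩ | ⟨h, h'⟩ <;>
        rcases (ed_eq_iff hjk nbc).1 hv2 with ⟨g, g'⟩ | ⟨g, g'⟩ <;>
        refine ⟨?_, ?_, ?_⟩ <;> omega
    have h3rd : ed i j hij = ed c a nca := (ed_eq_iff hij nca).2 (Or.inr ⟨h3.1, h3.2.1⟩)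
    have hA1 : A i j = 1 := by rw [h3.1, h3.2.1]; exact hac
    have hA2 : A j k = 1 := by rw [h3.2.1, h3.2.2]; exact hcb
    have hA3 : A k i = 1 := by rw [h3.2.2, h3.1]; exact hba
    have hmem : (i, j, k) ∈ S6 a b c := by
      rw [h3.1, h3.2.1, h3.2.2]; simp [S6]
    rw [if_pos hmem, hw1, hv2, h3rd]
    simp only [flip, if_pos rfl, if_true, if_neg n12, if_neg n13, if_neg n23,
      if_neg (Ne.symm n12), if_neg (Ne.symm n13), if_neg (Ne.symm n23), hA1, hA2, hA3]
    ring
  · exact absurd (hw1.symm.trans hw2) n12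


lemma S6_card {a b c : Fin n} (nab : a ≠ b) (nbc : b ≠ c) (nca : c ≠ a) :
    (S6 a b c).card = 6 := by
  rw [S6]
  rw [Finset.card_insert_of_notMem (by
    simp only [Finset.mem_insert, Finset.mem_singleton, Prod.mk.injEq]; omega)]
  rw [Finset.card_insert_of_notMem (by
    simp only [Finset.mem_insert, Finset.mem_singleton, Prod.mk.injEq]; omega)]
  rw [Finset.card_insert_of_notMem (by
    simp only [Finset.mem_insert, Finset.mem_singleton, Prod.mk.injEq]; omega)]
  rw [Finset.card_insert_of_notMem (by
    simp only [Finset.mem_insert, Finset.mem_singleton, Prod.mk.injEq]; omega)]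
  rw [Finset.card_insert_of_notMem (by
    simp only [Finset.mem_singleton, Prod.mk.injEq]; omega)]
  rfl

lemma sum3_combine (g1 g2 g3 g4 h : Fin n → Fin n → Fin n → ℝ)
    (H : ∀ i j k, g1 i j k - g2 i j k - g3 i j k + g4 i j k = h i j k) :
    ((∑ i, ∑ j, ∑ k, g1 i j k) - (∑ i, ∑ j, ∑ k, g2 i j k) - (∑ i, ∑ j, ∑ k, g3 i j k)
      + (∑ i, ∑ j, ∑ k, g4 i j k)) = ∑ i, ∑ j, ∑ k, h i j k := by
  simp only [← Finset.sum_sub_distrib, ← Finset.sum_add_distrib]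
  exact Finset.sum_congr rfl fun i _ => Finset.sum_congr rfl fun j _ =>
    Finset.sum_congr rfl fun k _ => H i j k

lemma sum_if {α β γ : Type*} [Fintype α] [Fintype β] [Fintype γ]
    [DecidableEq α] [DecidableEq β] [DecidableEq γ]
    (s : Finset (α × β × γ)) (v : ℝ) :
    (∑ i, ∑ j, ∑ k, (if (i,j,k) ∈ s then v else 0)) = s.card * v := by
  have this : (∑ i, ∑ j, ∑ k, (if (i,j,k) ∈ s then v else 0))
      = ∑ p : α × β × γ, (if p ∈ s then v else 0) := by
    rw [Fintype.sum_prod_type]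
    exact (Finset.sum_congr rfl fun i _ =>
      Fintype.sum_prod_type (fun q : β × γ => if (i, q) ∈ s then v else 0)).symm
  rw [this, Finset.sum_ite_mem, Finset.univ_inter, Finset.sum_const, nsmul_eq_mul]

set_option maxHeartbeats 2000000 in
lemma key (A : Matrix (Fin n) (Fin n) ℝ) (hAs : ∀ i j, A i j = A j i)
    (hAdiag : ∀ i, A i i = 0) {a b c : Fin n}
    (hab : A a b = 1) (hbc : A b c = 1) (hca : A c a = 1)
    (nab : a ≠ b) (nbc : b ≠ c) (nca : c ≠ a)
    (x : E n → ℝ) :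
    F A x - F A (flip (ed a b nab) x) - F A (flip (ed b c nbc) x)
      + F A (flip (ed a b nab) (flip (ed b c nbc) x))
    = 24 * (x (ed a b nab) * x (ed b c nbc) * x (ed c a nca)) := by
  unfold F
  refine (sum3_combine _ _ _ _ _ (perTriple A hAs hAdiag hab hbc hca nab nbc nca x)).trans ?_
  rw [sum_if, S6_card nab nbc nca]
  push_cast
  ring


noncomputable def cmeas : Measure ℝ :=
  (2:ENNReal)⁻¹ • Measure.dirac (1:ℝ) + (2:ENNReal)⁻¹ • Measure.dirac (-1:ℝ)

instance : IsProbabilityMeasure cmeas := by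
  constructor
  simp [cmeas]
  rw [ENNReal.inv_two_add_inv_two]

lemma marginal {Ω : Type*} [MeasureSpace Ω] [IsProbabilityMeasure (ℙ : Measure Ω)]
    (g : Ω → ℝ) (hg : Measurable g) (hv : ∀ ω, g ω = 1 ∨ g ω = -1)
    (hd : ℙ {ω | g ω = 1} = 1 / 2) :
    Measure.map g ℙ = cmeas := by
  classical
  have hs1 : MeasurableSet {ω | g ω = 1} := hg (measurableSet_singleton 1)
  have hcompl : {ω | g ω = -1} = {ω | g ω = 1}ᶜ := by
    ext ω
    simp only [Set.mem_setOf_eq, Set.mem_compl_iff]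
    constructor
    · intro h h1; rw [h1] at h; norm_num at h
    · intro h; exact (hv ω).resolve_left h
  rw [one_div] at hd
  have hd2 : ℙ {ω | g ω = -1} = 2⁻¹ := by
    rw [hcompl, measure_compl hs1 (measure_ne_top _ _), hd, measure_univ,
      ← ENNReal.inv_two_add_inv_two, ENNReal.add_sub_cancel_right (by norm_num)]
  refine Measure.ext fun s hs => ?_
  rw [Measure.map_apply hg hs]
  have hrhs : cmeas s = (if (1:ℝ) ∈ s then 2⁻¹ else 0) + (if (-1:ℝ) ∈ s then 2⁻¹ else 0) := by
    simp [cmeas, Measure.dirac_apply' _ hs, Set.indicator]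
  rw [hrhs]
  by_cases h1 : (1:ℝ) ∈ s <;> by_cases h2 : (-1:ℝ) ∈ s
  · have hp : g ⁻¹' s = Set.univ := by
      ext ω
      simp only [Set.mem_preimage, Set.mem_univ, iff_true]
      rcases hv ω with h | h <;> rw [h] <;> assumption
    rw [hp, measure_univ, if_pos h1, if_pos h2, ENNReal.inv_two_add_inv_two]
  · have hp : g ⁻¹' s = {ω | g ω = 1} := by
      ext ω
      simp only [Set.mem_preimage, Set.mem_setOf_eq]
      constructor
      · intro hh
        rcases hv ω with h | h
        · exact h
        · exact absurd (h ▸ hh) h2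
      · intro hh; rw [hh]; exact h1
    rw [hp, hd, if_pos h1, if_neg h2, add_zero]
  · have hp : g ⁻¹' s = {ω | g ω = -1} := by
      ext ω
      simp only [Set.mem_preimage, Set.mem_setOf_eq]
      constructor
      · intro hh
        rcases hv ω with h | h
        · exact absurd (h ▸ hh) h1
        · exact h
      · intro hh; rw [hh]; exact h2
    rw [hp, hd2, if_neg h1, if_pos h2, zero_add]
  · have hp : g ⁻¹' s = ∅ := by
      ext ω
      simp only [Set.mem_preimage, Set.mem_empty_iff_false, iff_false]
      intro hh
      rcases hv ω with h | h
      · exact absurd (h ▸ hh) h1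
      · exact absurd (h ▸ hh) h2
    rw [hp, if_neg h1, if_neg h2, add_zero]
    exact measure_empty

lemma cmeas_neg : Measure.map (fun t : ℝ => -t) cmeas = cmeas := by
  rw [cmeas, Measure.map_add _ _ measurable_neg, Measure.map_smul, Measure.map_smul,
    Measure.map_dirac' measurable_neg, Measure.map_dirac' measurable_neg]
  norm_num
  rw [add_comm]


lemma M_measurable (i j : Fin n) : Measurable fun x : E n → ℝ => M x i j := by
  unfold M
  rcases lt_or_ge i j with h | h
  · simpa [h] using measurable_pi_apply _
  · rcases lt_or_ge j i with h2 | h2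
    · simp only [dif_neg (not_lt.2 h), dif_pos h2]; exact measurable_pi_apply _
    · simp only [dif_neg (not_lt.2 h), dif_neg (not_lt.2 h2)]; exact measurable_const

lemma F_measurable (A : Matrix (Fin n) (Fin n) ℝ) : Measurable (F A) := by
  unfold F
  refine Finset.measurable_sum _ fun i _ => Finset.measurable_sum _ fun j _ =>
    Finset.measurable_sum _ fun k _ => ?_
  exact measurable_const.mul (((M_measurable i j).mul (M_measurable j k)).mul (M_measurable k i))

lemma flip_measurable (e : E n) : Measurable (flip e) := by
  refine measurable_pi_lambda _ fun e' => ?_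
  by_cases h : e' = e
  · simp only [flip, if_pos h]; exact (measurable_pi_apply _).neg
  · simp only [flip, if_neg h]; exact measurable_pi_apply _

lemma flip_preserving (e : E n) :
    Measure.map (flip e) (Measure.pi fun _ : E n => cmeas) = Measure.pi fun _ : E n => cmeas := by
  classical
  refine (Measure.pi_eq fun s hs => ?_).symm
  rw [Measure.map_apply (flip_measurable e) (MeasurableSet.univ_pi hs)]
  have hpre : flip e ⁻¹' (Set.pi Set.univ s)
      = Set.pi Set.univ (fun e' => if e' = e then (fun t : ℝ => -t) ⁻¹' (s e') else s e') := by
    ext x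
    simp only [Set.mem_preimage, Set.mem_pi, Set.mem_univ, true_implies]
    refine forall_congr' fun e' => ?_
    by_cases h : e' = e
    · subst h; simp [flip]
    · simp [flip, h]
  rw [hpre, Measure.pi_pi]
  refine Finset.prod_congr rfl fun e' _ => ?_
  by_cases h : e' = e
  · subst h
    rw [if_pos rfl, ← Measure.map_apply measurable_neg (hs _), cmeas_neg]
  · rw [if_neg h]

end Stmt17Aux

open Stmt17Aux

theorem stmt17 {Ω : Type*} [MeasureSpace Ω] [IsProbabilityMeasure (ℙ : Measure Ω)]
    {n : ℕ} (A : Matrix (Fin n) (Fin n) ℝ)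
    (hAsymm : Aᵀ = A) (hA01 : ∀ i j, A i j = 0 ∨ A i j = 1) (hAdiag : ∀ i, A i i = 0)
    (ξ : Fin n → Fin n → Ω → ℝ)
    (hξsymm : ∀ i j, ξ i j = ξ j i)
    (hmeas : ∀ i j, Measurable (ξ i j))
    (hval : ∀ i j ω, ξ i j ω = 1 ∨ ξ i j ω = -1)
    (hdist : ∀ i j, ℙ {ω | ξ i j ω = 1} = 1 / 2)
    (hindep : iIndepFun
      (fun p : {p : Fin n × Fin n // p.1 < p.2} => ξ p.1.1 p.1.2) ℙ)
    (Abar : Ω → Matrix (Fin n) (Fin n) ℝ)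
    (hAbar : ∀ ω i j, Abar ω i j = ξ i j ω * A i j) :
    (Matrix.trace (A * A * A) = 0 →
      ∀ ω, Matrix.trace (Abar ω * Abar ω * Abar ω) = 0) ∧
    (0 < Matrix.trace (A * A * A) →
      (1 / 4 : ENNReal) ≤ ℙ {ω | 0 < |Matrix.trace (Abar ω * Abar ω * Abar ω)|}) := by
  classical
  have hAs : ∀ i j, A i j = A j i := fun i j => by
    conv_lhs => rw [← hAsymm]
    rfl
  have hnn : ∀ i j k : Fin n, 0 ≤ A i j * A j k * A k i := by
    intro i j k
    have h1 : 0 ≤ A i j := by rcases hA01 i j with h | h <;> rw [h] <;> norm_num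
    have h2 : 0 ≤ A j k := by rcases hA01 j k with h | h <;> rw [h] <;> norm_num
    have h3 : 0 ≤ A k i := by rcases hA01 k i with h | h <;> rw [h] <;> norm_num
    positivity
  constructor
  · -- part 1
    intro h0 ω
    rw [trace_cube] at h0 ⊢
    have h1 := (Finset.sum_eq_zero_iff_of_nonneg (fun i _ =>
      Finset.sum_nonneg fun j _ => Finset.sum_nonneg fun k _ => hnn i j k)).1 h0
    have hz : ∀ i j k : Fin n, A i j * A j k * A k i = 0 := by
      intro i j k
      have h2 := (Finset.sum_eq_zero_iff_of_nonneg (fun j _ =>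
        Finset.sum_nonneg fun k _ => hnn i j k)).1 (h1 i (Finset.mem_univ i))
      exact (Finset.sum_eq_zero_iff_of_nonneg (fun k _ => hnn i j k)).1
        (h2 j (Finset.mem_univ j)) k (Finset.mem_univ k)
    refine Finset.sum_eq_zero fun i _ => Finset.sum_eq_zero fun j _ =>
      Finset.sum_eq_zero fun k _ => ?_
    rw [hAbar, hAbar, hAbar]
    calc (ξ i j ω * A i j) * (ξ j k ω * A j k) * (ξ k i ω * A k i)
        = (ξ i j ω * ξ j k ω * ξ k i ω) * (A i j * A j k * A k i) := by ring
      _ = 0 := by rw [hz i j k, mul_zero]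
  · -- part 2
    intro hpos
    rw [trace_cube] at hpos
    obtain ⟨a, -, ha⟩ := Finset.exists_ne_zero_of_sum_ne_zero hpos.ne'
    obtain ⟨b, -, hb⟩ := Finset.exists_ne_zero_of_sum_ne_zero ha
    obtain ⟨c, -, habc⟩ := Finset.exists_ne_zero_of_sum_ne_zero hb
    have hab : A a b = 1 := by
      rcases hA01 a b with h | h
      · exact absurd (by rw [h]; ring) habc
      · exact h
    have hbc : A b c = 1 := by
      rcases hA01 b c with h | h
      · exact absurd (by rw [h]; ring) habc
      · exact h
    have hca : A c a = 1 := by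
      rcases hA01 c a with h | h
      · exact absurd (by rw [h]; ring) habc
      · exact h
    have nab : a ≠ b := fun h => by rw [h, hAdiag] at hab; norm_num at hab
    have nbc : b ≠ c := fun h => by rw [h, hAdiag] at hbc; norm_num at hbc
    have nca : c ≠ a := fun h => by rw [h, hAdiag] at hca; norm_num at hca
    set e1 := ed a b nab with he1
    set e2 := ed b c nbc with he2
    set e3 := ed c a nca with he3
    set ξvec : Ω → (E n → ℝ) := fun ω e => ξ e.1.1 e.1.2 ω with hξvec
    have hξvecMeas : Measurable ξvec := measurable_pi_lambda _ fun e => hmeas _ _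
    -- trace of Abar as F of the sign vector
    have hAB : ∀ ω i j, Abar ω i j = A i j * M (ξvec ω) i j := by
      intro ω i j
      rw [hAbar]
      rcases lt_trichotomy i j with h | h | h
      · simp only [M, dif_pos h]
        ring
      · rw [h, hAdiag]
        ring
      · simp only [M, dif_neg (not_lt.2 h.le), dif_pos h]
        have : ξ i j ω = ξ j i ω := congrFun (hξsymm i j) ω
        rw [this]
        ring
    have htr : ∀ ω, Matrix.trace (Abar ω * Abar ω * Abar ω) = F A (ξvec ω) := by
      intro ω
      rw [trace_cube]
      unfold F
      refine Finset.sum_congr rfl fun i _ => Finset.sum_congr rfl fun j _ =>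
        Finset.sum_congr rfl fun k _ => ?_
      rw [hAB, hAB, hAB]
      ring
    -- the pushforward measure
    set μ : Measure (E n → ℝ) := Measure.pi fun _ : E n => cmeas with hμ
    have hjoint : Measure.map ξvec ℙ = μ := by
      refine (Measure.pi_eq fun s hs => ?_).symm
      rw [Measure.map_apply hξvecMeas (MeasurableSet.univ_pi hs)]
      have hpre : ξvec ⁻¹' (Set.pi Set.univ s)
          = ⋂ e ∈ Finset.univ, (fun p : E n => ξ p.1.1 p.1.2) e ⁻¹' (s e) := by
        ext ω
        simp [Set.mem_pi, hξvec]
      rw [hpre, hindep.measure_inter_preimage_eq_mul Finset.univ (fun e _ => hs e)]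
      refine Finset.prod_congr rfl fun e _ => ?_
      rw [← Measure.map_apply (hmeas _ _) (hs e),
        marginal _ (hmeas _ _) (hval _ _) (hdist _ _)]
    -- the event set
    set Sset : Set (E n → ℝ) := (F A) ⁻¹' ({0}ᶜ) with hSset
    have hSmeas : MeasurableSet Sset := (F_measurable A) (measurableSet_singleton 0).compl
    have hPS : ℙ {ω | 0 < |Matrix.trace (Abar ω * Abar ω * Abar ω)|} = μ Sset := by
      have hset : {ω | 0 < |Matrix.trace (Abar ω * Abar ω * Abar ω)|} = ξvec ⁻¹' Sset := by
        ext ω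
        simp only [Set.mem_setOf_eq, Set.mem_preimage, hSset, Set.mem_compl_iff,
          Set.mem_singleton_iff, abs_pos, htr ω]
      rw [hset, ← hjoint, Measure.map_apply hξvecMeas hSmeas]
    -- the full-measure set of nonvanishing coordinates
    set Nset : Set (E n → ℝ) := {x | x e1 ≠ 0 ∧ x e2 ≠ 0 ∧ x e3 ≠ 0} with hNset
    have hNmeas : MeasurableSet Nset := by
      refine MeasurableSet.inter ?_ (MeasurableSet.inter ?_ ?_) <;>
        exact (measurable_pi_apply _) (measurableSet_singleton 0).compl
    have hμN : μ Nset = 1 := by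
      rw [← hjoint, Measure.map_apply hξvecMeas hNmeas]
      have : ξvec ⁻¹' Nset = Set.univ := by
        ext ω
        simp only [Set.mem_preimage, hNset, Set.mem_setOf_eq, Set.mem_univ, iff_true, hξvec]
        refine ⟨?_, ?_, ?_⟩ <;>
          · rcases hval _ _ ω with h | h <;> rw [h] <;> norm_num
      rw [this, measure_univ]
    -- covering by the four flips
    have hsub : Nset ⊆ Sset ∪ flip e1 ⁻¹' Sset ∪ flip e2 ⁻¹' Sset
        ∪ (fun x => flip e1 (flip e2 x)) ⁻¹' Sset := by
      intro x hx
      by_contra hnot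
      simp only [Set.mem_union, not_or, Set.mem_preimage, hSset, Set.mem_compl_iff,
        Set.mem_singleton_iff, not_not] at hnot
      obtain ⟨⟨⟨h1, h2⟩, h3⟩, h4⟩ := hnot
      have hkey := key A hAs hAdiag hab hbc hca nab nbc nca x
      rw [h1, h2, h3, h4] at hkey
      have hz : x e1 * x e2 * x e3 = 0 := by linarith
      obtain ⟨g1, g2, g3⟩ := hx
      exact (mul_ne_zero (mul_ne_zero g1 g2) g3) hz
    -- measures of flipped events
    have hf1 : μ (flip e1 ⁻¹' Sset) = μ Sset := by
      rw [← Measure.map_apply (flip_measurable e1) hSmeas, hμ, flip_preserving]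
    have hf2 : μ (flip e2 ⁻¹' Sset) = μ Sset := by
      rw [← Measure.map_apply (flip_measurable e2) hSmeas, hμ, flip_preserving]
    have hf12 : μ ((fun x => flip e1 (flip e2 x)) ⁻¹' Sset) = μ Sset := by
      have hcomp : (fun x => flip e1 (flip e2 x)) = flip e1 ∘ flip e2 := rfl
      rw [hcomp, Set.preimage_comp, ← Measure.map_apply (flip_measurable e2)
        ((flip_measurable e1) hSmeas), hμ, flip_preserving,
        ← Measure.map_apply (flip_measurable e1) hSmeas, flip_preserving]
    have hle : (1 : ENNReal) ≤ 4 * μ Sset := by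
      calc (1 : ENNReal) = μ Nset := hμN.symm
        _ ≤ μ (Sset ∪ flip e1 ⁻¹' Sset ∪ flip e2 ⁻¹' Sset
            ∪ (fun x => flip e1 (flip e2 x)) ⁻¹' Sset) := measure_mono hsub
        _ ≤ μ (Sset ∪ flip e1 ⁻¹' Sset ∪ flip e2 ⁻¹' Sset)
            + μ ((fun x => flip e1 (flip e2 x)) ⁻¹' Sset) := measure_union_le _ _
        _ ≤ (μ (Sset ∪ flip e1 ⁻¹' Sset) + μ (flip e2 ⁻¹' Sset))
            + μ ((fun x => flip e1 (flip e2 x)) ⁻¹' Sset) :=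
            add_le_add_left (measure_union_le _ _) _
        _ ≤ ((μ Sset + μ (flip e1 ⁻¹' Sset)) + μ (flip e2 ⁻¹' Sset))
            + μ ((fun x => flip e1 (flip e2 x)) ⁻¹' Sset) :=
            add_le_add_left (add_le_add_left (measure_union_le _ _) _) _
        _ = 4 * μ Sset := by rw [hf1, hf2, hf12]; ring
    rw [hPS]
    have h4 : (4 : ENNReal) ≠ 0 := by norm_num
    have h4' : (4 : ENNReal) ≠ ⊤ := by norm_num
    calc (1 / 4 : ENNReal) ≤ (4 * μ Sset) / 4 := by
          exact ENNReal.div_le_div_right hle 4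
      _ = μ Sset := by rw [mul_comm, mul_div_assoc, ENNReal.div_self h4 h4', mul_one]
end
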